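/- Let a, b, a', b' > 0 and λ > 1 with λa + (1−λ)a' > 0 and λb + (1−λ)b' > 0. Then D_λ(Beta(a,b) ‖ Beta(a',b')) = (1/(λ−1))·(log B(λa + (1−λ)a', λb + (1−λ)b') − λ·log B(a,b)) + log B(a',b'). Moreover, if λa + (1−λ)a' ≤ 0 or λb + (1−λ)b' ≤ 0, then D_λ(Beta(a,b) ‖ Beta(a',b')) = +∞. -/

import Mathlib

/-!
STATEMENT 6: For `a, b, a', b' > 0` and `λ > 1`:
if `λa + (1−λ)a' > 0` and `λb + (1−λ)b' > 0`, then
`D_λ(Beta(a,b) ‖ Beta(a',b')) = (1/(λ−1))·(log B(λa+(1−λ)a', λb+(1−λ)b') − λ·log B(a,b))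
  + log B(a',b')`;
moreover, if `λa + (1−λ)a' ≤ 0` or `λb + (1−λ)b' ≤ 0`, then
`D_λ(Beta(a,b) ‖ Beta(a',b')) = +∞`.
-/

open MeasureTheory ENNReal

/-- The Beta function `B(a, b) = Γ(a)Γ(b)/Γ(a+b)`. -/
noncomputable def betaFun (a b : ℝ) : ℝ :=
  Real.Gamma a * Real.Gamma b / Real.Gamma (a + b)

/-- Density of the `Beta(a, b)` distribution on `(0, 1)`:
`x ↦ x^{a−1}(1−x)^{b−1}/B(a,b)`. -/
noncomputable def betaPdf (a b : ℝ) (x : ℝ) : ℝ≥0∞ :=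
  ENNReal.ofReal (x ^ (a - 1) * (1 - x) ^ (b - 1) / betaFun a b)

/-- Rényi divergence of order `l > 1` between measures given by densities `p`, `q`
with respect to a common dominating measure `ν`, with value `+∞` if the integral
diverges. -/
noncomputable def renyiDiv {Ω : Type*} [MeasurableSpace Ω] (ν : Measure Ω)
    (p q : Ω → ℝ≥0∞) (l : ℝ) : EReal :=
  (((l - 1)⁻¹ : ℝ) : EReal) * ENNReal.log (∫⁻ ω, p ω ^ l * q ω ^ (1 - l) ∂ν)

/-- Rényi divergence of order `l` between `Beta(a, b)` and `Beta(a', b')`. -/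
noncomputable def renyiDivBeta (a b a' b' : ℝ) (l : ℝ) : EReal :=
  renyiDiv (volume.restrict (Set.Ioo (0 : ℝ) 1)) (betaPdf a b) (betaPdf a' b') l

open Set

lemma betaFun_pos {a b : ℝ} (ha : 0 < a) (hb : 0 < b) : 0 < betaFun a b :=
  div_pos (mul_pos (Real.Gamma_pos_of_pos ha) (Real.Gamma_pos_of_pos hb))
    (Real.Gamma_pos_of_pos (add_pos ha hb))

lemma meas_beta (α β : ℝ) :
    Measurable fun x : ℝ => ENNReal.ofReal (x ^ (α - 1) * (1 - x) ^ (β - 1)) := by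
  fun_prop

lemma cpow_eq_real {α : ℝ} (x : ℝ) (hx : 0 ≤ x) :
    (x : ℂ) ^ ((α : ℂ) - 1) = ((x ^ (α - 1) : ℝ) : ℂ) := by
  rw [show ((α:ℂ) - 1) = ((α - 1 : ℝ) : ℂ) by push_cast; ring, ← Complex.ofReal_cpow hx]

lemma complex_eq_real {α β : ℝ} {x : ℝ} (h0 : 0 ≤ x) (h1 : x ≤ 1) :
    (x:ℂ) ^ ((α:ℂ) - 1) * (1 - (x:ℂ)) ^ ((β:ℂ) - 1)
      = ((x ^ (α - 1) * (1 - x) ^ (β - 1) : ℝ) : ℂ) := by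
  rw [cpow_eq_real x h0, show (1 - (x:ℂ)) = ((1 - x : ℝ) : ℂ) by push_cast; ring,
    cpow_eq_real (1 - x) (by linarith), ← Complex.ofReal_mul]

lemma integrableOn_beta {α β : ℝ} (hα : 0 < α) (hβ : 0 < β) :
    IntegrableOn (fun x : ℝ => x ^ (α - 1) * (1 - x) ^ (β - 1)) (Ioo 0 1) := by
  have h := (Complex.betaIntegral_convergent (u := α) (v := β) (by simpa using hα)
    (by simpa using hβ)).1
  have h3 : IntegrableOn (fun x : ℝ => x ^ (α - 1) * (1 - x) ^ (β - 1)) (Ioc 0 1) := by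
    refine h.re.congr ?_
    refine (ae_restrict_iff' measurableSet_Ioc).2 (ae_of_all _ fun x hx => ?_)
    simp only
    rw [complex_eq_real hx.1.le hx.2]
    simp
  exact h3.mono_set Ioo_subset_Ioc_self

lemma integral_beta {α β : ℝ} (hα : 0 < α) (hβ : 0 < β) :
    ∫ x in Ioo (0:ℝ) 1, x ^ (α - 1) * (1 - x) ^ (β - 1) = betaFun α β := by
  have key : Complex.Gamma α * Complex.Gamma β
      = Complex.Gamma (α + β) * Complex.betaIntegral α β :=
    Complex.Gamma_mul_Gamma_eq_betaIntegral (by simpa using hα) (by simpa using hβ)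
  have hbi : Complex.betaIntegral α β
      = ((∫ x in Ioo (0:ℝ) 1, x ^ (α - 1) * (1 - x) ^ (β - 1) : ℝ) : ℂ) := by
    rw [Complex.betaIntegral, intervalIntegral.integral_of_le zero_le_one]
    calc ∫ x in Ioc (0:ℝ) 1, (x:ℂ) ^ ((α:ℂ) - 1) * (1 - (x:ℂ)) ^ ((β:ℂ) - 1)
        = ∫ x in Ioc (0:ℝ) 1, ((x ^ (α - 1) * (1 - x) ^ (β - 1) : ℝ) : ℂ) :=
          setIntegral_congr_fun measurableSet_Ioc fun x hx => complex_eq_real hx.1.le hx.2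
      _ = ((∫ x in Ioc (0:ℝ) 1, x ^ (α - 1) * (1 - x) ^ (β - 1) : ℝ) : ℂ) := by
          exact integral_ofReal
      _ = _ := by rw [integral_Ioc_eq_integral_Ioo]
  rw [hbi] at key
  rw [show ((α:ℂ) + β) = ((α + β : ℝ) : ℂ) by push_cast; ring] at key
  rw [Complex.Gamma_ofReal, Complex.Gamma_ofReal, Complex.Gamma_ofReal] at key
  have keyR : Real.Gamma α * Real.Gamma β
      = Real.Gamma (α + β) * ∫ x in Ioo (0:ℝ) 1, x ^ (α - 1) * (1 - x) ^ (β - 1) := by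
    exact_mod_cast key
  have hne : Real.Gamma (α + β) ≠ 0 := (Real.Gamma_pos_of_pos (add_pos hα hβ)).ne'
  rw [betaFun]
  field_simp
  linarith [keyR]

lemma lintegral_beta_pos {α β : ℝ} (hα : 0 < α) (hβ : 0 < β) :
    ∫⁻ x in Ioo (0:ℝ) 1, ENNReal.ofReal (x ^ (α - 1) * (1 - x) ^ (β - 1))
      = ENNReal.ofReal (betaFun α β) := by
  rw [← integral_beta hα hβ, ← ofReal_integral_eq_lintegral_ofReal (integrableOn_beta hα hβ)]
  refine (ae_restrict_iff' measurableSet_Ioo).2 (ae_of_all _ fun x hx => ?_)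
  exact mul_nonneg (Real.rpow_nonneg hx.1.le _) (Real.rpow_nonneg (by linarith [hx.2]) _)

lemma lintegral_beta_symm (α β : ℝ) :
    ∫⁻ x in Ioo (0:ℝ) 1, ENNReal.ofReal (x ^ (α - 1) * (1 - x) ^ (β - 1))
      = ∫⁻ x in Ioo (0:ℝ) 1, ENNReal.ofReal (x ^ (β - 1) * (1 - x) ^ (α - 1)) := by
  have hmp : MeasurePreserving (fun x : ℝ => 1 - x) volume volume :=
    Measure.measurePreserving_sub_left volume 1
  have hpre : (fun x : ℝ => 1 - x) ⁻¹' (Ioo 0 1) = Ioo 0 1 := by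
    ext x; simp only [mem_preimage, mem_Ioo]; constructor <;> intro h <;> constructor <;> linarith [h.1, h.2]
  have h2 := (hmp.restrict_preimage (measurableSet_Ioo (a := (0:ℝ)) (b := 1)))
  rw [hpre] at h2
  rw [← h2.lintegral_comp (meas_beta β α)]
  refine setLIntegral_congr_fun measurableSet_Ioo (fun x hx => ?_)
  show ENNReal.ofReal (x ^ (α - 1) * (1 - x) ^ (β - 1))
      = ENNReal.ofReal ((1 - x) ^ (β - 1) * (1 - (1 - x)) ^ (α - 1))
  rw [show (1 - (1 - x)) = x by ring, mul_comm]

lemma lintegral_beta_top {α : ℝ} (hα : α ≤ 0) (β : ℝ) :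
    ∫⁻ x in Ioo (0:ℝ) 1, ENNReal.ofReal (x ^ (α - 1) * (1 - x) ^ (β - 1)) = ⊤ := by
  set c : ℝ := min ((1/2 : ℝ) ^ (β - 1)) 1 with hc
  have hcpos : 0 < c := lt_min (Real.rpow_pos_of_pos one_half_pos _) one_pos
  have hbound : ∀ x ∈ Ioo (0:ℝ) (1/2), c * x ^ (α - 1) ≤ x ^ (α - 1) * (1 - x) ^ (β - 1) := by
    intro x hx
    rw [mul_comm c _]
    refine mul_le_mul_of_nonneg_left ?_ (Real.rpow_nonneg hx.1.le _)
    have h1 : (1/2 : ℝ) ≤ 1 - x := by linarith [hx.2]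
    have h2 : 1 - x ≤ 1 := by linarith [hx.1]
    rcases le_or_gt 0 (β - 1) with h | h
    · exact le_trans (min_le_left _ _) (Real.rpow_le_rpow (by norm_num) h1 h)
    · exact le_trans (min_le_right _ _)
        (by simpa using Real.rpow_le_rpow_of_nonpos (by linarith) h2 h.le)
  have hdiv : ∫⁻ x in Ioo (0:ℝ) (1/2), ENNReal.ofReal (x ^ (α - 1)) = ⊤ := by
    by_contra h
    have hint : IntegrableOn (fun x : ℝ => x ^ (α - 1)) (Ioo 0 (1/2)) := by
      refine (lintegral_ofReal_ne_top_iff_integrable ?_ ?_).1 h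
      · exact (Measurable.aestronglyMeasurable (by fun_prop))
      · exact (ae_restrict_iff' measurableSet_Ioo).2
          (ae_of_all _ fun x hx => Real.rpow_nonneg hx.1.le _)
    rw [intervalIntegral.integrableOn_Ioo_rpow_iff one_half_pos] at hint
    linarith
  refine top_le_iff.1 ?_
  calc (⊤ : ℝ≥0∞) = ENNReal.ofReal c * ∫⁻ x in Ioo (0:ℝ) (1/2), ENNReal.ofReal (x ^ (α - 1)) := by
        rw [hdiv, ENNReal.mul_top (ENNReal.ofReal_pos.2 hcpos).ne']
    _ = ∫⁻ x in Ioo (0:ℝ) (1/2), ENNReal.ofReal c * ENNReal.ofReal (x ^ (α - 1)) :=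
        (lintegral_const_mul _ (by fun_prop)).symm
    _ ≤ ∫⁻ x in Ioo (0:ℝ) (1/2), ENNReal.ofReal (x ^ (α - 1) * (1 - x) ^ (β - 1)) := by
        refine setLIntegral_mono (by fun_prop) fun x hx => ?_
        rw [← ENNReal.ofReal_mul hcpos.le]
        exact ENNReal.ofReal_le_ofReal (hbound x hx)
    _ ≤ _ := lintegral_mono_set (Ioo_subset_Ioo le_rfl (by norm_num))

lemma real_identity {a b a' b' l x : ℝ} (ha : 0 < a) (hb : 0 < b) (ha' : 0 < a')
    (hb' : 0 < b') (hx0 : 0 < x) (hx1 : x < 1) :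
    (x ^ (a - 1) * (1 - x) ^ (b - 1) / betaFun a b) ^ l
      * (x ^ (a' - 1) * (1 - x) ^ (b' - 1) / betaFun a' b') ^ (1 - l)
    = x ^ (l * a + (1 - l) * a' - 1) * (1 - x) ^ (l * b + (1 - l) * b' - 1)
      * ((betaFun a b ^ l)⁻¹ * betaFun a' b' ^ (l - 1)) := by
  have hy : (0:ℝ) < 1 - x := by linarith
  have hB := betaFun_pos ha hb
  have hB' := betaFun_pos ha' hb'
  rw [Real.div_rpow (by positivity) hB.le, Real.div_rpow (by positivity) hB'.le,
    Real.mul_rpow (Real.rpow_nonneg hx0.le _) (Real.rpow_nonneg hy.le _),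
    Real.mul_rpow (Real.rpow_nonneg hx0.le _) (Real.rpow_nonneg hy.le _),
    ← Real.rpow_mul hx0.le, ← Real.rpow_mul hy.le,
    ← Real.rpow_mul hx0.le, ← Real.rpow_mul hy.le]
  have hBB : betaFun a' b' ^ (1 - l) = (betaFun a' b' ^ (l - 1))⁻¹ := by
    rw [show (1 - l) = -(l - 1) by ring, Real.rpow_neg hB'.le]
  have e1 : x ^ ((a - 1) * l) * x ^ ((a' - 1) * (1 - l))
      = x ^ (l * a + (1 - l) * a' - 1) := by
    rw [← Real.rpow_add hx0]; congr 1; ring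
  have e2 : (1 - x) ^ ((b - 1) * l) * (1 - x) ^ ((b' - 1) * (1 - l))
      = (1 - x) ^ (l * b + (1 - l) * b' - 1) := by
    rw [← Real.rpow_add hy]; congr 1; ring
  rw [hBB, ← e1, ← e2]
  field_simp

lemma lintegral_renyi {a b a' b' : ℝ} (ha : 0 < a) (hb : 0 < b) (ha' : 0 < a')
    (hb' : 0 < b') (l : ℝ) :
    ∫⁻ x in Ioo (0:ℝ) 1, betaPdf a b x ^ l * betaPdf a' b' x ^ (1 - l)
      = ENNReal.ofReal ((betaFun a b ^ l)⁻¹ * betaFun a' b' ^ (l - 1))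
        * ∫⁻ x in Ioo (0:ℝ) 1,
            ENNReal.ofReal (x ^ (l * a + (1 - l) * a' - 1)
              * (1 - x) ^ (l * b + (1 - l) * b' - 1)) := by
  rw [← lintegral_const_mul _ (meas_beta _ _)]
  refine setLIntegral_congr_fun measurableSet_Ioo (fun x hx => ?_)
  have hy : (0:ℝ) < 1 - x := by linarith [hx.2]
  have hv : 0 < x ^ (a - 1) * (1 - x) ^ (b - 1) / betaFun a b :=
    div_pos (mul_pos (Real.rpow_pos_of_pos hx.1 _) (Real.rpow_pos_of_pos hy _))
      (betaFun_pos ha hb)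
  have hv' : 0 < x ^ (a' - 1) * (1 - x) ^ (b' - 1) / betaFun a' b' :=
    div_pos (mul_pos (Real.rpow_pos_of_pos hx.1 _) (Real.rpow_pos_of_pos hy _))
      (betaFun_pos ha' hb')
  show betaPdf a b x ^ l * betaPdf a' b' x ^ (1 - l) = _
  rw [betaPdf, betaPdf, ENNReal.ofReal_rpow_of_pos hv, ENNReal.ofReal_rpow_of_pos hv',
    ← ENNReal.ofReal_mul (Real.rpow_nonneg hv.le _),
    real_identity ha hb ha' hb' hx.1 hx.2,
    ENNReal.ofReal_mul (mul_nonneg (Real.rpow_nonneg hx.1.le _) (Real.rpow_nonneg hy.le _)), mul_comm]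

theorem renyi_divergence_beta (a b a' b' : ℝ)
    (ha : 0 < a) (hb : 0 < b) (ha' : 0 < a') (hb' : 0 < b')
    (l : ℝ) (hl : 1 < l) :
    (0 < l * a + (1 - l) * a' → 0 < l * b + (1 - l) * b' →
      renyiDivBeta a b a' b' l =
        (((l - 1)⁻¹ * (Real.log (betaFun (l * a + (1 - l) * a') (l * b + (1 - l) * b'))
              - l * Real.log (betaFun a b))
          + Real.log (betaFun a' b') : ℝ) : EReal)) ∧
    (l * a + (1 - l) * a' ≤ 0 ∨ l * b + (1 - l) * b' ≤ 0 →
      renyiDivBeta a b a' b' l = ⊤) := by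
  have hB := betaFun_pos ha hb
  have hB' := betaFun_pos ha' hb'
  have hC : 0 < (betaFun a b ^ l)⁻¹ * betaFun a' b' ^ (l - 1) :=
    mul_pos (inv_pos.2 (Real.rpow_pos_of_pos hB _)) (Real.rpow_pos_of_pos hB' _)
  have hl1 : (0:ℝ) < (l - 1)⁻¹ := inv_pos.2 (by linarith)
  constructor
  · intro hA hBB
    have hBαβ := betaFun_pos hA hBB
    rw [renyiDivBeta, renyiDiv, lintegral_renyi ha hb ha' hb' l, lintegral_beta_pos hA hBB,
      ← ENNReal.ofReal_mul hC.le, ENNReal.log_ofReal_of_pos (mul_pos hC hBαβ), ← EReal.coe_mul]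
    norm_cast
    rw [Real.log_mul hC.ne' hBαβ.ne',
      Real.log_mul (inv_ne_zero (Real.rpow_pos_of_pos hB _).ne') (Real.rpow_pos_of_pos hB' _).ne',
      Real.log_inv, Real.log_rpow hB, Real.log_rpow hB']
    have hne : l - 1 ≠ 0 := by linarith
    field_simp
    ring
  · intro h
    have htop : ∫⁻ x in Ioo (0:ℝ) 1, betaPdf a b x ^ l * betaPdf a' b' x ^ (1 - l) = ⊤ := by
      rw [lintegral_renyi ha hb ha' hb' l]
      have hint : ∫⁻ x in Ioo (0:ℝ) 1,
          ENNReal.ofReal (x ^ (l * a + (1 - l) * a' - 1)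
            * (1 - x) ^ (l * b + (1 - l) * b' - 1)) = ⊤ := by
        rcases h with h | h
        · exact lintegral_beta_top h _
        · rw [lintegral_beta_symm]
          exact lintegral_beta_top h _
      rw [hint, ENNReal.mul_top (ENNReal.ofReal_pos.2 hC).ne']
    rw [renyiDivBeta, renyiDiv, htop, ENNReal.log_top]
    exact EReal.coe_mul_top_of_pos hl1
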